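/- Let n and w_1, …, w_n be positive integers and set d_w := lcm(w_1, …, w_n). Let R be a commutative ℕ-graded ring that is generated over its degree-zero part R_0 by n homogeneous elements f_1, …, f_n of degrees w_1, …, w_n respectively. Then for every integer k ≥ 2, if the ((k−1)d_w)-th Veronese subring R^{((k−1)d_w)} is not generated over R_0 in degree 1, then there exists a w-bubble u with w·u ≥ k·d_w. In particular, if there are no w-bubbles, then R^{(d_w)} is generated over R_0 in degree 1. -/

import Mathlib

/-- The weighted dot product `w · u = ∑ i, w i * u i`. -/
def dotW {n : ℕ} (w u : Fin n → ℕ) : ℕ := ∑ i, w i * u i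

/-- `d_w`, the least common multiple of the weights. -/
def lcmW {n : ℕ} (w : Fin n → ℕ) : ℕ := Finset.univ.lcm w

/-- `u` is a `w`-bubble: `w · u ≥ 2 d_w` and there is no `v ⪯ u` with `w · v = d_w`. -/
def IsBubble {n : ℕ} (w u : Fin n → ℕ) : Prop :=
  2 * lcmW w ≤ dotW w u ∧
    ¬ ∃ v : Fin n → ℕ, (∀ i, v i ≤ u i) ∧ dotW w v = lcmW w

/-- The `r`-th Veronese subring of the graded ring `𝒜` is generated over `𝒜 0` in
degree `1`: for every `m ≥ 1`, every element of `𝒜 (r * m)` is a sum of products of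
`m` elements of `𝒜 r`. -/
def VeroneseGenInDegOne {R : Type*} [CommRing R] (𝒜 : ℕ → AddSubgroup R) (r : ℕ) : Prop :=
  ∀ m : ℕ, 1 ≤ m → ∀ x ∈ 𝒜 (r * m), x ∈ AddSubgroup.closure
    { y : R | ∃ g : Fin m → R, (∀ j, g j ∈ 𝒜 r) ∧ y = ∏ j, g j }

section Aux

variable {n : ℕ}

lemma dotW_add (w u v : Fin n → ℕ) : dotW w (u + v) = dotW w u + dotW w v := by
  simp only [dotW, Pi.add_apply, Nat.mul_add]
  rw [Finset.sum_add_distrib]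

lemma dotW_le (w : Fin n → ℕ) {u v : Fin n → ℕ} (h : ∀ i, v i ≤ u i) :
    dotW w v ≤ dotW w u :=
  Finset.sum_le_sum fun i _ => Nat.mul_le_mul_left _ (h i)

lemma dotW_sub (w : Fin n → ℕ) {u v : Fin n → ℕ} (h : ∀ i, v i ≤ u i) :
    dotW w (fun i => u i - v i) = dotW w u - dotW w v := by
  have : dotW w (fun i => u i - v i) + dotW w v = dotW w u := by
    unfold dotW
    rw [← Finset.sum_add_distrib]
    apply Finset.sum_congr rfl
    intro i _
    rw [← Nat.mul_add, Nat.sub_add_cancel (h i)]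
  omega

/-- Extraction lemma: assuming every `u` with `w·u ≥ k·d` contains a sub-vector of dot
product `d`, any `u` with `w·u ≥ (k-1+j)·d` contains a sub-vector of dot product `j·d`. -/
lemma extract_chunk {d k : ℕ}
    (H : ∀ u : Fin n → ℕ, k * d ≤ dotW w u → ∃ v, (∀ i, v i ≤ u i) ∧ dotW w v = d) :
    ∀ (j : ℕ) (u : Fin n → ℕ), (k - 1 + j) * d ≤ dotW w u →
      ∃ c, (∀ i, c i ≤ u i) ∧ dotW w c = j * d := by
  intro j
  induction j with
  | zero =>
    intro u _
    exact ⟨0, fun i => Nat.zero_le _, by simp [dotW]⟩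
  | succ j ih =>
    intro u hu
    have hk' : k * d ≤ dotW w u := by
      refine le_trans (Nat.mul_le_mul_right d ?_) hu
      omega
    obtain ⟨v, hv, hvd⟩ := H u hk'
    have hvu : dotW w v ≤ dotW w u := dotW_le w hv
    have harg : (k - 1 + j) * d ≤ dotW w (fun i => u i - v i) := by
      rw [dotW_sub w hv, hvd]
      have he : (k - 1 + (j + 1)) * d = (k - 1 + j) * d + d := by ring
      omega
    obtain ⟨c, hc, hcd⟩ := ih (fun i => u i - v i) harg
    refine ⟨c + v, fun i => ?_, ?_⟩
    · have h1 := hc i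
      have h2 := hv i
      simp only [Pi.add_apply]
      omega
    · rw [dotW_add, hcd, hvd]; ring

/-- Splitting lemma: under the same hypothesis, any `u` with `w·u = (k-1)·d·m`
(`m ≥ 1`, `k ≥ 2`) splits into `m` parts each of dot product `(k-1)·d`. -/
lemma split_parts {d k : ℕ}
    (H : ∀ u : Fin n → ℕ, k * d ≤ dotW w u → ∃ v, (∀ i, v i ≤ u i) ∧ dotW w v = d) :
    ∀ (m : ℕ) (u : Fin n → ℕ), dotW w u = ((k - 1) * d) * (m + 1) →
      ∃ V : Fin (m + 1) → (Fin n → ℕ), (∀ j, dotW w (V j) = (k - 1) * d) ∧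
        (∀ i, u i = ∑ j, V j i) := by
  intro m
  induction m with
  | zero =>
    intro u hu
    refine ⟨fun _ => u, fun j => by simpa using hu, fun i => by simp⟩
  | succ m ih =>
    intro u hu
    have h1 : (k - 1 + (k - 1)) * d ≤ dotW w u := by
      rw [hu]
      have h2 : (k - 1 + (k - 1)) * d = (k - 1) * d * 2 := by ring
      rw [h2]
      exact Nat.mul_le_mul_left _ (by omega)
    obtain ⟨c, hc, hcd⟩ := extract_chunk H (k - 1) u h1
    have hcu : dotW w c ≤ dotW w u := dotW_le w hc
    have harg : dotW w (fun i => u i - c i) = (k - 1) * d * (m + 1) := by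
      rw [dotW_sub w hc, hcd, hu]
      have h4 : (k - 1) * d * (m + 1 + 1) = (k - 1) * d * (m + 1) + (k - 1) * d := by ring
      omega
    obtain ⟨V, hV, hVsum⟩ := ih (fun i => u i - c i) harg
    refine ⟨Fin.cons c V, ?_, ?_⟩
    · intro j
      refine Fin.cases ?_ (fun j' => ?_) j
      · simpa using hcd
      · simpa using hV j'
    · intro i
      rw [Fin.sum_univ_succ]
      simp only [Fin.cons_zero, Fin.cons_succ]
      have h3 := hVsum i
      have := hc i
      omega

end Aux

section Ring

variable {R : Type*} [CommRing R] (𝒜 : ℕ → AddSubgroup R) [GradedRing 𝒜]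
variable {n : ℕ} (w : Fin n → ℕ) (f : Fin n → R)

/-- The set of "monomials" `a * ∏ fᵢ^{uᵢ}` with `a ∈ 𝒜 0`. -/
def monSet : Set R :=
  {y | ∃ a, a ∈ 𝒜 0 ∧ ∃ u : Fin n → ℕ, y = a * ∏ i, f i ^ u i}

lemma mon_mem_graded (hf : ∀ i, f i ∈ 𝒜 (w i)) {a : R} (ha : a ∈ 𝒜 0) (u : Fin n → ℕ) :
    a * ∏ i, f i ^ u i ∈ 𝒜 (dotW w u) := by
  have hprod : ∏ i, f i ^ u i ∈ 𝒜 (∑ i, u i • w i) :=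
    SetLike.prod_pow_mem_graded 𝒜 w f u (fun i _ => hf i)
  have hdeg : (∑ i, u i • w i) = dotW w u := by
    unfold dotW
    apply Finset.sum_congr rfl
    intro i _
    rw [smul_eq_mul, Nat.mul_comm]
  rw [hdeg] at hprod
  simpa using SetLike.mul_mem_graded ha hprod

lemma monSet_mul (hf : ∀ i, f i ∈ 𝒜 (w i)) {x y : R}
    (hx : x ∈ monSet 𝒜 f) (hy : y ∈ monSet 𝒜 f) : x * y ∈ monSet 𝒜 f := by
  obtain ⟨a, ha, u, rfl⟩ := hx
  obtain ⟨b, hb, v, rfl⟩ := hy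
  refine ⟨a * b, by simpa using SetLike.mul_mem_graded ha hb, u + v, ?_⟩
  rw [mul_mul_mul_comm]
  congr 1
  rw [← Finset.prod_mul_distrib]
  apply Finset.prod_congr rfl
  intro i _
  rw [Pi.add_apply, pow_add]

lemma mul_mem_monClosure (hf : ∀ i, f i ∈ 𝒜 (w i)) {x y : R}
    (hx : x ∈ AddSubgroup.closure (monSet 𝒜 f))
    (hy : y ∈ AddSubgroup.closure (monSet 𝒜 f)) :
    x * y ∈ AddSubgroup.closure (monSet 𝒜 f) := by
  induction hx using AddSubgroup.closure_induction with
  | mem x hxm =>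
    induction hy using AddSubgroup.closure_induction with
    | mem y hym => exact AddSubgroup.subset_closure (monSet_mul 𝒜 w f hf hxm hym)
    | zero => simpa using zero_mem _
    | add a b _ _ pa pb => rw [mul_add]; exact add_mem pa pb
    | neg a _ pa => rw [mul_neg]; exact neg_mem pa
  | zero => simpa using zero_mem _
  | add a b _ _ pa pb => rw [add_mul]; exact add_mem pa pb
  | neg a _ pa => rw [neg_mul]; exact neg_mem pa

lemma mem_monClosure (hf : ∀ i, f i ∈ 𝒜 (w i))
    (hgen : Subring.closure ((𝒜 0 : Set R) ∪ Set.range f) = ⊤) (x : R) :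
    x ∈ AddSubgroup.closure (monSet 𝒜 f) := by
  have hx : x ∈ Subring.closure ((𝒜 0 : Set R) ∪ Set.range f) := by
    rw [hgen]; trivial
  induction hx using Subring.closure_induction with
  | mem y hy =>
    apply AddSubgroup.subset_closure
    rcases hy with hy | ⟨i, rfl⟩
    · exact ⟨y, hy, 0, by simp⟩
    · refine ⟨1, SetLike.GradedOne.one_mem, Pi.single i 1, ?_⟩
      rw [one_mul]
      rw [Finset.prod_eq_single i (fun b _ hb => by
        rw [Pi.single_eq_of_ne hb, pow_zero]) (fun h => absurd (Finset.mem_univ i) h)]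
      rw [Pi.single_eq_same, pow_one]
  | zero => exact zero_mem _
  | one =>
    exact AddSubgroup.subset_closure ⟨1, SetLike.GradedOne.one_mem, 0, by simp⟩
  | add a b _ _ pa pb => exact add_mem pa pb
  | neg a _ pa => exact neg_mem pa
  | mul a b _ _ pa pb => exact mul_mem_monClosure 𝒜 w f hf pa pb

/-- The key generation lemma: if every `u` with `w·u ≥ k·d` contains a sub-vector of
dot product `d = lcm w`, then the `((k-1)d)`-th Veronese is generated in degree one. -/
lemma veronese_gen_of_extract (hf : ∀ i, f i ∈ 𝒜 (w i))
    (hgen : Subring.closure ((𝒜 0 : Set R) ∪ Set.range f) = ⊤) {k : ℕ}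
    (H : ∀ u : Fin n → ℕ, k * lcmW w ≤ dotW w u →
      ∃ v, (∀ i, v i ≤ u i) ∧ dotW w v = lcmW w) :
    VeroneseGenInDegOne 𝒜 ((k - 1) * lcmW w) := by
  set d := lcmW w with hd
  set r := (k - 1) * d with hr
  intro m hm x hx
  obtain ⟨m', rfl⟩ : ∃ m', m = m' + 1 := ⟨m - 1, by omega⟩
  set S := { y : R | ∃ g : Fin (m' + 1) → R, (∀ j, g j ∈ 𝒜 r) ∧ y = ∏ j, g j } with hS
  set N := r * (m' + 1) with hN
  -- x is in the additive closure of monomials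
  have hxM : x ∈ AddSubgroup.closure (monSet 𝒜 f) := mem_monClosure 𝒜 w f hf hgen x
  -- project onto degree N
  have hproj : GradedRing.proj 𝒜 N x = x := by
    rw [GradedRing.proj_apply, DirectSum.decompose_of_mem_same 𝒜 hx]
  rw [← hproj]
  have hmap : GradedRing.proj 𝒜 N x ∈
      AddSubgroup.closure (GradedRing.proj 𝒜 N '' monSet 𝒜 f) := by
    rw [← AddMonoidHom.map_closure]
    exact AddSubgroup.mem_map_of_mem _ hxM
  refine (AddSubgroup.closure_le _).mpr ?_ hmap
  rintro y ⟨z, ⟨a, ha, u, rfl⟩, rfl⟩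
  have hzdeg : a * ∏ i, f i ^ u i ∈ 𝒜 (dotW w u) := mon_mem_graded 𝒜 w f hf ha u
  by_cases hcase : dotW w u = N
  · -- the monomial survives projection; split it into m'+1 factors of degree r
    have hproj2 : GradedRing.proj 𝒜 N (a * ∏ i, f i ^ u i) = a * ∏ i, f i ^ u i := by
      rw [GradedRing.proj_apply, DirectSum.decompose_of_mem_same 𝒜 (hcase ▸ hzdeg)]
    rw [hproj2]
    apply AddSubgroup.subset_closure
    obtain ⟨V, hV, hVsum⟩ := split_parts H m' u (by rw [hcase])
    refine ⟨fun j => (if j = 0 then a else 1) * ∏ i, f i ^ V j i, fun j => ?_, ?_⟩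
    · have hVdeg : ∏ i, f i ^ V j i ∈ 𝒜 r := by
        have := mon_mem_graded 𝒜 w f hf (SetLike.GradedOne.one_mem (A := 𝒜)) (V j)
        rw [one_mul, hV j] at this
        exact this
      by_cases hj : j = 0
      · subst hj
        simp only [if_pos rfl]
        simpa using SetLike.mul_mem_graded ha hVdeg
      · simpa [hj] using hVdeg
    · rw [Finset.prod_mul_distrib]
      congr 1
      · rw [Finset.prod_eq_single (0 : Fin (m' + 1))
          (fun b _ hb => by rw [if_neg hb]) (fun h => absurd (Finset.mem_univ _) h)]
        simp
      · rw [Finset.prod_comm]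
        apply Finset.prod_congr rfl
        intro i _
        rw [hVsum i, Finset.prod_pow_eq_pow_sum]
  · -- the monomial is killed by the projection
    have : GradedRing.proj 𝒜 N (a * ∏ i, f i ^ u i) = 0 := by
      rw [GradedRing.proj_apply, DirectSum.decompose_of_mem_ne 𝒜 hzdeg hcase]
    rw [this]
    exact zero_mem _

end Ring

theorem nongeneration_implies_bubble {R : Type*} [CommRing R] (𝒜 : ℕ → AddSubgroup R)
    [GradedRing 𝒜] {n : ℕ} (hn : 0 < n) (w : Fin n → ℕ) (hw : ∀ i, 0 < w i)
    (f : Fin n → R) (hf : ∀ i, f i ∈ 𝒜 (w i))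
    (hgen : Subring.closure ((𝒜 0 : Set R) ∪ Set.range f) = ⊤) :
    (∀ k : ℕ, 2 ≤ k → ¬ VeroneseGenInDegOne 𝒜 ((k - 1) * lcmW w) →
        ∃ u : Fin n → ℕ, IsBubble w u ∧ k * lcmW w ≤ dotW w u) ∧
      ((¬ ∃ u : Fin n → ℕ, IsBubble w u) → VeroneseGenInDegOne 𝒜 (lcmW w)) := by
  have main : ∀ k : ℕ, 2 ≤ k → ¬ VeroneseGenInDegOne 𝒜 ((k - 1) * lcmW w) →
      ∃ u : Fin n → ℕ, IsBubble w u ∧ k * lcmW w ≤ dotW w u := by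
    intro k hk hver
    by_contra hno
    push_neg at hno
    apply hver
    apply veronese_gen_of_extract 𝒜 w f hf hgen
    intro u hu
    have hnb : ¬ IsBubble w u := fun hb => absurd hu (Nat.not_le.mpr (hno u hb))
    unfold IsBubble at hnb
    push_neg at hnb
    apply hnb
    calc 2 * lcmW w ≤ k * lcmW w := Nat.mul_le_mul_right _ hk
    _ ≤ dotW w u := hu
  refine ⟨main, fun hnb => ?_⟩
  have h2 := main 2 le_rfl
  rw [show (2 - 1) * lcmW w = lcmW w by ring] at h2
  by_contra hver
  obtain ⟨u, hu, -⟩ := h2 hver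
  exact hnb ⟨u, hu⟩
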